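/- Let F be the field of fractions of the polynomial ring 𝔽₂[z₁, z₂, z₃], and work in the formal power series ring F[[t]]. The elements f_i = 1 + z_i t (i = 1, 2, 3) are units of F[[t]]. Set P_S = f₁f₂f₃ + f₁f₂⁻¹f₃⁻¹ + f₁⁻¹f₂f₃⁻¹ + f₁⁻¹f₂⁻¹f₃. Then the coefficients of t⁰, t¹, t², t³ in P_S all vanish, and the coefficient of t⁴ in P_S equals z₁²z₂² + z₂²z₃² + z₃²z₁²; that is, P_S = (z₁²z₂² + z₂²z₃² + z₃²z₁²) t⁴ + O(t⁵). -/

import Mathlib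

open PowerSeries

lemma stmt12_inv_key {K : Type*} [Field K] (h2 : (2 : K) = 0) (x : K) :
    (1 + PowerSeries.C x * PowerSeries.X) * PowerSeries.mk (fun n => x ^ n) = 1 := by
  ext n
  rcases n with _ | n
  · simp
  · rw [add_mul, one_mul, mul_assoc]
    simp only [map_add, PowerSeries.coeff_mk, PowerSeries.coeff_succ_X_mul,
      PowerSeries.coeff_C_mul, PowerSeries.coeff_one, Nat.succ_ne_zero, if_false]
    linear_combination (x ^ (n + 1)) * h2

lemma stmt12_ring_inverse {K : Type*} [Field K] (a b : PowerSeries K) (h : a * b = 1) :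
    Ring.inverse a = b := by
  have hu : IsUnit a := IsUnit.of_mul_eq_one _ h
  calc Ring.inverse a = Ring.inverse a * (a * b) := by rw [h, mul_one]
    _ = b := by rw [← mul_assoc, Ring.inverse_mul_cancel _ hu, one_mul]

lemma stmt12_coeff_le3 {K : Type*} [Field K] (h2 : (2:K) = 0) (a b c : K) :
    ∀ n : ℕ, n ≤ 3 →
    coeff n ((1 + C a * X) * (1 + C b * X) * (1 + C c * X)
      + (1 + C a * X) * (mk fun n => b ^ n) * (mk fun n => c ^ n)
      + (mk fun n => a ^ n) * (1 + C b * X) * (mk fun n => c ^ n)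
      + (mk fun n => a ^ n) * (mk fun n => b ^ n) * (1 + C c * X)) = 0 := by
  intro n hn
  interval_cases n <;>
    simp only [map_add, coeff_mul, Finset.Nat.sum_antidiagonal_eq_sum_range_succ_mk,
      Finset.sum_range_succ, Finset.sum_range_zero, coeff_mk, coeff_one, coeff_C_mul,
      coeff_X] <;>
    norm_num
  · linear_combination 2 * h2
  · linear_combination (2*a + 2*b + 2*c) * h2
  · linear_combination (c^2 + 2*b*c + b^2 + 2*a*c + 2*a*b + a^2) * h2
  · linear_combination (c^3 + b*c^2 + b^2*c + b^3 + a*c^2 + 2*a*b*c + a*b^2 + a^2*c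
      + a^2*b + a^3) * h2

lemma stmt12_coeff4 {K : Type*} [Field K] (h2 : (2:K) = 0) (a b c : K) :
    coeff 4 ((1 + C a * X) * (1 + C b * X) * (1 + C c * X)
      + (1 + C a * X) * (mk fun n => b ^ n) * (mk fun n => c ^ n)
      + (mk fun n => a ^ n) * (1 + C b * X) * (mk fun n => c ^ n)
      + (mk fun n => a ^ n) * (mk fun n => b ^ n) * (1 + C c * X)) =
      a ^ 2 * b ^ 2 + b ^ 2 * c ^ 2 + c ^ 2 * a ^ 2 := by
  simp only [map_add, coeff_mul, Finset.Nat.sum_antidiagonal_eq_sum_range_succ_mk,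
    Finset.sum_range_succ, Finset.sum_range_zero, coeff_mk, coeff_one, coeff_C_mul, coeff_X]
  norm_num
  linear_combination (c^4 + b*c^3 + b^3*c + b^4 + a*c^3 + a*b*c^2 + a*b^2*c + a*b^3
    + a^2*b*c + a^3*c + a^3*b + a^4) * h2

/-- In `F[[t]]` with `F = Frac(𝔽₂[z₁,z₂,z₃])`, the elements
`f_i = 1 + z_i t` are units, and
`P_S = f₁f₂f₃ + f₁f₂⁻¹f₃⁻¹ + f₁⁻¹f₂f₃⁻¹ + f₁⁻¹f₂⁻¹f₃` has vanishing
coefficients in degrees `≤ 3` and coefficient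
`z₁²z₂² + z₂²z₃² + z₃²z₁²` in degree `4`. -/
theorem stmt12 :
    let F := FractionRing (MvPolynomial (Fin 3) (ZMod 2))
    let z : Fin 3 → F := fun i =>
      algebraMap (MvPolynomial (Fin 3) (ZMod 2)) F (MvPolynomial.X i)
    let f : Fin 3 → PowerSeries F := fun i =>
      1 + PowerSeries.C (z i) * PowerSeries.X
    let PS : PowerSeries F :=
      f 0 * f 1 * f 2 + f 0 * Ring.inverse (f 1) * Ring.inverse (f 2) +
        Ring.inverse (f 0) * f 1 * Ring.inverse (f 2) +
        Ring.inverse (f 0) * Ring.inverse (f 1) * f 2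
    (∀ i, IsUnit (f i)) ∧
    (∀ n : ℕ, n ≤ 3 → PowerSeries.coeff (R := F) n PS = 0) ∧
    PowerSeries.coeff (R := F) 4 PS =
      z 0 ^ 2 * z 1 ^ 2 + z 1 ^ 2 * z 2 ^ 2 + z 2 ^ 2 * z 0 ^ 2 := by
  intro F z f PS
  haveI : CharP F 2 :=
    charP_of_injective_algebraMap (IsFractionRing.injective (MvPolynomial (Fin 3) (ZMod 2)) _) 2
  have h2 : (2 : F) = 0 := by
    have := CharP.cast_eq_zero F 2
    simpa using this
  have hkey : ∀ i, f i * PowerSeries.mk (fun n => z i ^ n) = 1 := fun i =>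
    stmt12_inv_key h2 (z i)
  have hinv : ∀ i, Ring.inverse (f i) = PowerSeries.mk (fun n => z i ^ n) := fun i =>
    stmt12_ring_inverse _ _ (hkey i)
  refine ⟨fun i => IsUnit.of_mul_eq_one _ (hkey i), ?_, ?_⟩
  · intro n hn
    show PowerSeries.coeff (R := F) n
      (f 0 * f 1 * f 2 + f 0 * Ring.inverse (f 1) * Ring.inverse (f 2) +
        Ring.inverse (f 0) * f 1 * Ring.inverse (f 2) +
        Ring.inverse (f 0) * Ring.inverse (f 1) * f 2) = 0
    rw [hinv 0, hinv 1, hinv 2]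
    exact stmt12_coeff_le3 h2 (z 0) (z 1) (z 2) n hn
  · show PowerSeries.coeff (R := F) 4 PS = _
    show PowerSeries.coeff (R := F) 4
      (f 0 * f 1 * f 2 + f 0 * Ring.inverse (f 1) * Ring.inverse (f 2) +
        Ring.inverse (f 0) * f 1 * Ring.inverse (f 2) +
        Ring.inverse (f 0) * Ring.inverse (f 1) * f 2) = _
    rw [hinv 0, hinv 1, hinv 2]
    exact stmt12_coeff4 h2 (z 0) (z 1) (z 2)
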